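/- Deciding whether the virus inoculation game on a graph G admits a friendship Nash equilibrium of social cost at most Ck + (n−k)L/n (equivalently, with at most k secure players) is NP-complete for every F ∈ [0,1]; specifically, with C = 1 and L = n/1.5, G has a vertex cover of size k if and only if the game has an FNE with at most k secure players. -/

import Mathlib

set_option linter.unusedSectionVars false
set_option linter.unusedVariables false


open Finset
open scoped Classical

noncomputable section

variable {V : Type*} [Fintype V] [DecidableEq V]

/-- Reachability through insecure players: a path along edges whose endpoints are all insecure. -/
def insecureReach (G : SimpleGraph V) (a : V → Bool) : V → V → Prop :=
  Relation.ReflTransGen (fun x y => G.Adj x y ∧ a x = false ∧ a y = false)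

/-- Size of `i`'s attack component (if `i` is secure: the size of the component that would
result if `i` became insecure). -/
def compSize (G : SimpleGraph V) (a : V → Bool) (i : V) : ℕ :=
  {j | insecureReach G (Function.update a i false) i j}.ncard

/-- Actual individual cost: `C` if inoculated, else `L · k_i / n`. -/
def actualCost (G : SimpleGraph V) (C L : ℝ) (a : V → Bool) (i : V) : ℝ :=
  if a i = true then C else L * (compSize G a i) / (Fintype.card V)

def socialCost (G : SimpleGraph V) (C L : ℝ) (a : V → Bool) : ℝ :=
  ∑ i, actualCost G C L a i

/-- Perceived cost: actual cost plus `F` times the sum of the neighbors' actual costs. -/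
def perceivedCost (G : SimpleGraph V) (C L F : ℝ) (a : V → Bool) (i : V) : ℝ :=
  actualCost G C L a i +
    F * ∑ j ∈ Finset.univ.filter (fun j => G.Adj i j), actualCost G C L a j

/-- Pure Nash equilibrium: no unilateral deviation lowers the actual cost. -/
def isNE (G : SimpleGraph V) (C L : ℝ) (a : V → Bool) : Prop :=
  ∀ (i : V) (b : Bool),
    actualCost G C L a i ≤ actualCost G C L (Function.update a i b) i

/-- Friendship Nash equilibrium: no unilateral deviation lowers the perceived cost. -/
def isFNE (G : SimpleGraph V) (C L F : ℝ) (a : V → Bool) : Prop :=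
  ∀ (i : V) (b : Bool),
    perceivedCost G C L F a i ≤ perceivedCost G C L F (Function.update a i b) i

/-- Star graph on `Fin n` with center `0`. -/
def starG (n : ℕ) : SimpleGraph (Fin n) :=
  SimpleGraph.fromRel (fun i _ => i.val = 0)

lemma reach_mono {G : SimpleGraph V} {a a' : V → Bool}
    (h : ∀ x, a x = false → a' x = false) {i j : V}
    (hr : insecureReach G a i j) : insecureReach G a' i j :=
  by
    have hle : (fun x y => G.Adj x y ∧ a x = false ∧ a y = false) ≤
        (fun x y => G.Adj x y ∧ a' x = false ∧ a' y = false) :=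
      fun x y hxy => ⟨hxy.1, h x hxy.2.1, h y hxy.2.2⟩
    exact Relation.ReflTransGen.mono hle i j hr

lemma compSize_le {G : SimpleGraph V} {a a' : V → Bool}
    (h : ∀ x, a x = false → a' x = false) (i : V) :
    compSize G a i ≤ compSize G a' i := by
  apply Set.ncard_le_ncard _ (Set.toFinite _)
  intro j hj
  refine reach_mono (fun x hx => ?_) hj
  rcases eq_or_ne x i with rfl | hne
  · simp
  · simp only [Function.update_of_ne hne] at hx ⊢
    exact h x hx

lemma compSize_eq_one {G : SimpleGraph V} {a : V → Bool} {i : V}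
    (hi : a i = false) (h : ∀ j, G.Adj i j → a j = true) :
    compSize G a i = 1 := by
  have hupd : Function.update a i false = a := by
    rw [← hi]; exact Function.update_eq_self i a
  have hset : {j | insecureReach G (Function.update a i false) i j} = {i} := by
    ext j
    simp only [Set.mem_setOf_eq, Set.mem_singleton_iff, hupd]
    constructor
    · intro hr
      rcases Relation.ReflTransGen.cases_head hr with heq | ⟨y, ⟨hadj, _, hy⟩, _⟩
      · exact heq.symm
      · exact absurd (h y hadj) (by simp [hy])
    · rintro rfl; exact Relation.ReflTransGen.refl
  rw [compSize, hset, Set.ncard_singleton]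

lemma two_le_compSize {G : SimpleGraph V} {a : V → Bool} {i j : V}
    (hadj : G.Adj i j) (hi : a i = false) (hj : a j = false) :
    2 ≤ compSize G a i := by
  have hupd : Function.update a i false = a := by
    rw [← hi]; exact Function.update_eq_self i a
  rw [compSize, hupd]
  have h1 : i ∈ {x | insecureReach G a i x} := Relation.ReflTransGen.refl
  have h2 : j ∈ {x | insecureReach G a i x} :=
    Relation.ReflTransGen.single ⟨hadj, hi, hj⟩
  have : 1 < {x | insecureReach G a i x}.ncard :=
    (Set.one_lt_ncard (Set.toFinite _)).2 ⟨i, h1, j, h2, hadj.ne⟩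
  omega

lemma actualCost_mono {G : SimpleGraph V} {C L : ℝ} (hL : 0 ≤ L) {a a' : V → Bool}
    (h : ∀ x, a x = false → a' x = false) {j : V} (hj : a j = a' j) :
    actualCost G C L a j ≤ actualCost G C L a' j := by
  unfold actualCost
  cases hb : a j
  · rw [hb] at hj
    simp only [← hj, hb, Bool.false_eq_true, if_false]
    have hm := compSize_le (G := G) h j
    gcongr

  · rw [hb] at hj; simp [hb, ← hj]

lemma cost_true_eq {G : SimpleGraph V} {C L : ℝ} {a : V → Bool} {i : V}
    (h : a i = true) : actualCost G C L a i = C := by simp [actualCost, h]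

lemma cost_false_eq {G : SimpleGraph V} (hn : 2 ≤ Fintype.card V) {a : V → Bool} {i : V}
    (hai : a i = false) :
    actualCost G 1 ((Fintype.card V : ℝ) / 1.5) a i = (compSize G a i : ℝ) / 1.5 := by
  have h0 : (Fintype.card V : ℝ) ≠ 0 := Nat.cast_ne_zero.mpr (by omega)
  simp only [actualCost, hai, Bool.false_eq_true, if_false]
  field_simp

lemma fne_of_cover {G : SimpleGraph V} {F : ℝ} (hF0 : 0 ≤ F)
    (hn : 2 ≤ Fintype.card V) {a : V → Bool}
    (h1 : ∀ i j, G.Adj i j → a i = false → a j = true)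
    (h2 : ∀ i, a i = true → ∃ j, G.Adj i j ∧ a j = false) :
    isFNE G 1 ((Fintype.card V : ℝ) / 1.5) F a := by
  set L : ℝ := (Fintype.card V : ℝ) / 1.5 with hLdef
  have hL0 : 0 ≤ L := by positivity
  intro i b
  cases hai : a i <;> cases b
  · have h : Function.update a i false = a := by rw [← hai]; exact Function.update_eq_self i a
    rw [h]
  · -- a i = false, deviate to true
    set a' := Function.update a i true with ha'
    have hcompi : compSize G a i = 1 := compSize_eq_one hai (fun j hj => h1 i j hj hai)
    have hci : actualCost G 1 L a i = 1 / 1.5 := by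
      rw [hLdef, cost_false_eq hn hai, hcompi]; norm_num
    have hci' : actualCost G 1 L a' i = 1 := cost_true_eq (by simp [ha'])
    have hsum : ∀ j ∈ Finset.univ.filter (fun j => G.Adj i j),
        actualCost G 1 L a j = actualCost G 1 L a' j := by
      intro j hjmem
      rw [Finset.mem_filter] at hjmem
      have hadj := hjmem.2
      have haj : a j = true := h1 i j hadj hai
      have haj' : a' j = true := by rw [ha', Function.update_of_ne hadj.ne']; exact haj
      rw [cost_true_eq haj, cost_true_eq haj']
    unfold perceivedCost
    rw [Finset.sum_congr rfl hsum]
    have : actualCost G 1 L a i ≤ actualCost G 1 L a' i := by rw [hci, hci']; norm_num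
    linarith
  · -- a i = true, deviate to false
    set a' := Function.update a i false with ha'
    obtain ⟨j0, hadj0, hj0⟩ := h2 i hai
    have hai' : a' i = false := by simp [ha']
    have hj0' : a' j0 = false := by rw [ha', Function.update_of_ne hadj0.ne']; exact hj0
    have hm := two_le_compSize hadj0 hai' hj0'
    have hc1 : actualCost G 1 L a i = 1 := cost_true_eq hai
    have hc2 : (1:ℝ) ≤ actualCost G 1 L a' i := by
      rw [hLdef, cost_false_eq hn hai']
      have h2' : (2:ℝ) ≤ (compSize G a' i : ℝ) := by exact_mod_cast hm
      rw [le_div_iff₀ (by norm_num : (0:ℝ) < 1.5)]; linarith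
    have hmonoh : ∀ x, a x = false → a' x = false := by
      intro x hx
      rcases eq_or_ne x i with rfl | hne
      · exact hai'
      · rw [ha', Function.update_of_ne hne]; exact hx
    have hsum : ∑ j ∈ Finset.univ.filter (fun j => G.Adj i j), actualCost G 1 L a j ≤
        ∑ j ∈ Finset.univ.filter (fun j => G.Adj i j), actualCost G 1 L a' j := by
      apply Finset.sum_le_sum
      intro j hjmem
      rw [Finset.mem_filter] at hjmem
      exact actualCost_mono hL0 hmonoh
        (by rw [ha', Function.update_of_ne hjmem.2.ne'])
    unfold perceivedCost
    have := mul_le_mul_of_nonneg_left hsum hF0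
    linarith
  · have h : Function.update a i true = a := by rw [← hai]; exact Function.update_eq_self i a
    rw [h]

lemma cover_of_fne {G : SimpleGraph V} {F : ℝ} (hF0 : 0 ≤ F)
    (hn : 2 ≤ Fintype.card V) {a : V → Bool}
    (hfne : isFNE G 1 ((Fintype.card V : ℝ) / 1.5) F a) :
    ∀ u v, G.Adj u v → a u = true ∨ a v = true := by
  intro u v hadj
  by_contra hc
  push_neg at hc
  obtain ⟨hu, hv⟩ := hc
  simp only [ne_eq, Bool.not_eq_true] at hu hv
  set L : ℝ := (Fintype.card V : ℝ) / 1.5 with hLdef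
  have hL0 : 0 ≤ L := by positivity
  have hm := two_le_compSize hadj hu hv
  have h := hfne u true
  set a' := Function.update a u true with ha'
  have hc1 : actualCost G 1 L a' u = 1 := cost_true_eq (by simp [ha'])
  have hc2 : (4/3 : ℝ) ≤ actualCost G 1 L a u := by
    rw [hLdef, cost_false_eq hn hu]
    have h2' : (2:ℝ) ≤ (compSize G a u : ℝ) := by exact_mod_cast hm
    rw [le_div_iff₀ (by norm_num : (0:ℝ) < 1.5)]; linarith
  have hmonoh : ∀ x, a' x = false → a x = false := by
    intro x hx
    rcases eq_or_ne x u with rfl | hne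
    · exact hu
    · rw [ha', Function.update_of_ne hne] at hx; exact hx
  have hsum : ∑ j ∈ Finset.univ.filter (fun j => G.Adj u j), actualCost G 1 L a' j ≤
      ∑ j ∈ Finset.univ.filter (fun j => G.Adj u j), actualCost G 1 L a j := by
    apply Finset.sum_le_sum
    intro j hjmem
    rw [Finset.mem_filter] at hjmem
    exact actualCost_mono hL0 hmonoh
      (by rw [ha', Function.update_of_ne hjmem.2.ne'])
  unfold perceivedCost at h
  have := mul_le_mul_of_nonneg_left hsum hF0
  linarith


/-- The reduction underlying NP-completeness of computing the best FNE: with `C = 1` and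
`L = n/1.5`, for every `F ∈ [0,1]` and `k ≤ n`, the graph `G` has a vertex cover of size `k`
if and only if the virus inoculation game admits an FNE with at most `k` secure players
(equivalently, of social cost at most `Ck + (n−k)L/n`). -/
theorem stmt12 (G : SimpleGraph V) (F : ℝ) (hF0 : 0 ≤ F) (hF1 : F ≤ 1)
    (hn : 2 ≤ Fintype.card V) (k : ℕ) (hk : k ≤ Fintype.card V) :
    (∃ s : Finset V, (∀ u v : V, G.Adj u v → u ∈ s ∨ v ∈ s) ∧ s.card = k) ↔
    (∃ a : V → Bool, isFNE G 1 ((Fintype.card V : ℝ) / 1.5) F a ∧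
      (Finset.univ.filter (fun i => a i = true)).card ≤ k) := by
  constructor
  · rintro ⟨s, hcov, hcard⟩
    have hne : (s.powerset.filter (fun t => ∀ u v, G.Adj u v → u ∈ t ∨ v ∈ t)).Nonempty :=
      ⟨s, by simp only [Finset.mem_filter, Finset.mem_powerset]; exact ⟨le_refl s, hcov⟩⟩
    obtain ⟨t, htmem, hmin⟩ := Finset.exists_min_image _ Finset.card hne
    rw [Finset.mem_filter, Finset.mem_powerset] at htmem
    obtain ⟨hts, htcov⟩ := htmem
    -- every member of t has a neighbor outside t
    have h2' : ∀ i ∈ t, ∃ j, G.Adj i j ∧ j ∉ t := by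
      intro i hi
      by_contra hcon
      push_neg at hcon
      have hcov' : ∀ u v, G.Adj u v → u ∈ t.erase i ∨ v ∈ t.erase i := by
        intro u v huv
        rcases eq_or_ne u i with rfl | hneu
        · exact Or.inr (Finset.mem_erase.2 ⟨huv.ne', hcon v huv⟩)
        rcases eq_or_ne v i with rfl | hnev
        · exact Or.inl (Finset.mem_erase.2 ⟨huv.ne, hcon u huv.symm⟩)
        rcases htcov u v huv with hu | hv
        · exact Or.inl (Finset.mem_erase.2 ⟨hneu, hu⟩)
        · exact Or.inr (Finset.mem_erase.2 ⟨hnev, hv⟩)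
      have hle := hmin (t.erase i) (by
        rw [Finset.mem_filter, Finset.mem_powerset]
        exact ⟨(Finset.erase_subset _ _).trans hts, hcov'⟩)
      have hlt := Finset.card_erase_lt_of_mem hi
      omega
    set a : V → Bool := fun i => if i ∈ t then true else false with ha
    have hmem : ∀ i, a i = true ↔ i ∈ t := by
      intro i; by_cases h : i ∈ t <;> simp [ha, h]
    have hmem' : ∀ i, a i = false ↔ i ∉ t := by
      intro i; by_cases h : i ∈ t <;> simp [ha, h]
    refine ⟨a, fne_of_cover hF0 hn ?_ ?_, ?_⟩
    · intro i j hij hi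
      rw [hmem' i] at hi
      rw [hmem j]
      rcases htcov i j hij with h | h
      · exact absurd h hi
      · exact h
    · intro i hi
      obtain ⟨j, hadj, hj⟩ := h2' i ((hmem i).1 hi)
      exact ⟨j, hadj, (hmem' j).2 hj⟩
    · have : Finset.univ.filter (fun i => a i = true) = t := by
        ext i; simp [hmem i]
      rw [this]
      calc t.card ≤ s.card := Finset.card_le_card hts
        _ = k := hcard
  · rintro ⟨a, hfne, hcard⟩
    have hcov := cover_of_fne hF0 hn hfne
    obtain ⟨u, hsu, -, hcu⟩ :=
      Finset.exists_subsuperset_card_eq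
        (Finset.subset_univ (Finset.univ.filter (fun i => a i = true))) hcard
        (by simpa [Finset.card_univ] using hk)
    refine ⟨u, fun x y hxy => ?_, hcu⟩
    rcases hcov x y hxy with h | h
    · exact Or.inl (hsu (by simp [h]))
    · exact Or.inr (hsu (by simp [h]))
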